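/- Let n ≥ 2 be an integer, κ < 0 a real number, ω_n > 0 a constant, C ≥ 1 a constant, and let V : (0, ∞) → (0, ∞) be a differentiable function such that Q(s) := V(s)/B^κ_n(s) is non-decreasing on (0, ∞) and Q(R)/Q(R/2) < C for all R > 0. Then limsup_{R → ∞} [ ∫_{R/2}^{R} f_R'(s)²·V'(s) ds / ∫_{R/2}^{R} f_R(s)²·V'(s) ds ] ≤ −C·(n−1)²·κ/4. -/

import Mathlib

open Filter MeasureTheory Set intervalIntegral

private lemma aux_sinh_pos {x : ℝ} (hx : 0 < x) : 0 < Real.sinh x :=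
  Real.sinh_pos_iff.mpr hx

private lemma aux_one_le_coth {x : ℝ} (hx : 0 < x) :
    1 ≤ Real.cosh x / Real.sinh x :=
  (one_le_div (aux_sinh_pos hx)).mpr (le_of_lt (Real.sinh_lt_cosh x))

private lemma aux_coth_anti {x y : ℝ} (hx : 0 < x) (hxy : x ≤ y) :
    Real.cosh y / Real.sinh y ≤ Real.cosh x / Real.sinh x := by
  have hy : 0 < y := lt_of_lt_of_le hx hxy
  have hsx := aux_sinh_pos hx
  have hsy := aux_sinh_pos hy
  rw [div_le_div_iff₀ hsy hsx]
  have h1 : 0 ≤ Real.sinh (y - x) := Real.sinh_nonneg_iff.mpr (by linarith)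
  rw [Real.sinh_sub] at h1
  nlinarith

private lemma aux_coth_tendsto :
    Tendsto (fun x => Real.cosh x / Real.sinh x) atTop (nhds 1) := by
  have h0 : Tendsto (fun x : ℝ => Real.cosh x / Real.sinh x - 1) atTop (nhds 0) := by
    apply squeeze_zero' (g := fun x : ℝ => Real.exp (-x))
    · filter_upwards [eventually_ge_atTop (1:ℝ)] with x hx
      have := aux_one_le_coth (show (0:ℝ) < x by linarith)
      linarith
    · filter_upwards [eventually_ge_atTop (1:ℝ)] with x hx
      have hx0 : (0:ℝ) < x := by linarith
      have hs1 : 1 ≤ Real.sinh x := le_trans hx (Real.self_lt_sinh_iff.mpr hx0).le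
      have hs : (0:ℝ) < Real.sinh x := by linarith
      have heq : Real.cosh x / Real.sinh x - 1 = Real.exp (-x) / Real.sinh x := by
        rw [← Real.cosh_sub_sinh]
        field_simp
      rw [heq]
      exact div_le_self (Real.exp_nonneg _) hs1
    · exact Real.tendsto_exp_neg_atTop_nhds_zero
  have h1 := h0.add_const 1
  simpa using h1

private lemma aux_deriv_nonneg {Q : ℝ → ℝ} {s : ℝ} (hs : 0 < s)
    (hmono : MonotoneOn Q (Set.Ioi (0:ℝ))) (hdiff : DifferentiableAt ℝ Q s) :
    0 ≤ deriv Q s := by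
  have hd : HasDerivWithinAt Q (deriv Q s) (Set.Ioi s) s :=
    hdiff.hasDerivAt.hasDerivWithinAt
  rw [hasDerivWithinAt_iff_tendsto_slope] at hd
  have hne : Set.Ioi s \ {s} = Set.Ioi s := by
    apply Set.diff_singleton_eq_self
    simp
  rw [hne] at hd
  refine ge_of_tendsto hd ?_
  filter_upwards [self_mem_nhdsWithin] with t ht
  have hts : s < t := ht
  have hQ : Q s ≤ Q t := hmono (Set.mem_Ioi.mpr hs) (Set.mem_Ioi.mpr (hs.trans hts)) hts.le
  rw [slope_def_field]
  apply div_nonneg (by linarith) (by linarith)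

set_option maxHeartbeats 4000000 in
open Real in
/-- For n ≥ 2, κ < 0, ω_n > 0, C ≥ 1, V : (0,∞) → (0,∞)
differentiable with Q(s) := V(s)/B^κ_n(s) non-decreasing on (0, ∞) and
Q(R)/Q(R/2) < C for all R > 0 (extrinsic doubling property), and
f_R(s) = sin(2π(s − R/2)/R)/(S^κ_n(s))^{1/2}:
limsup_{R → ∞} [∫_{R/2}^{R} f_R'(s)²·V'(s) ds / ∫_{R/2}^{R} f_R(s)²·V'(s) ds]
  ≤ −C·(n−1)²·κ/4. -/
theorem stmt_16 (n : ℕ) (hn : 2 ≤ n) (κ : ℝ) (hκ : κ < 0) (ω : ℝ) (hω : 0 < ω)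
    (C : ℝ) (hC : 1 ≤ C)
    (S : ℝ → ℝ)
    (hS : ∀ t : ℝ, S t = Real.sinh (Real.sqrt (-κ) * t) / Real.sqrt (-κ))
    (Sn : ℝ → ℝ) (hSn : ∀ R : ℝ, Sn R = ω * (S R) ^ (n - 1))
    (Bn : ℝ → ℝ) (hBn : ∀ R : ℝ, Bn R = ∫ s in (0:ℝ)..R, Sn s)
    (V : ℝ → ℝ) (hVpos : ∀ s > (0:ℝ), 0 < V s)
    (hVdiff : ∀ s > (0:ℝ), DifferentiableAt ℝ V s)
    (Q : ℝ → ℝ) (hQ : ∀ s : ℝ, Q s = V s / Bn s)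
    (hQmono : MonotoneOn Q (Set.Ioi (0:ℝ)))
    (hQdoubling : ∀ R > (0:ℝ), Q R / Q (R / 2) < C)
    (f : ℝ → ℝ → ℝ)
    (hf : ∀ R s : ℝ, f R s =
        Real.sin (2 * π * (s - R / 2) / R) / Real.sqrt (Sn s)) :
    Filter.limsup
        (fun R =>
          (∫ s in (R / 2)..R, (deriv (f R) s) ^ 2 * deriv V s) /
            (∫ s in (R / 2)..R, (f R s) ^ 2 * deriv V s))
        Filter.atTop ≤ -C * ((n : ℝ) - 1) ^ 2 * κ / 4 := by
  have hκ' : (0:ℝ) < -κ := by linarith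
  set c : ℝ := Real.sqrt (-κ) with hc_def
  have hc : 0 < c := Real.sqrt_pos.mpr hκ'
  have hc2 : c ^ 2 = -κ := Real.sq_sqrt hκ'.le
  have hn2 : (2:ℝ) ≤ (n:ℝ) := by exact_mod_cast hn
  have hn1 : (1:ℝ) ≤ (n:ℝ) - 1 := by linarith
  set b : ℝ := ((n:ℝ) - 1) * c / 2 with hb_def
  have hb : 0 < b := by
    apply div_pos (mul_pos (by linarith) hc) two_pos
  -- S facts
  have hSpos : ∀ t : ℝ, 0 < t → 0 < S t := by
    intro t ht
    rw [hS]
    exact div_pos (aux_sinh_pos (by positivity)) hc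
  have hSfun : S = fun t => Real.sinh (c * t) / c := funext hS
  have hScont : Continuous S := by
    rw [hSfun]; fun_prop
  have hSderiv : ∀ t : ℝ, HasDerivAt S (Real.cosh (c*t)) t := by
    intro t
    have h1 : HasDerivAt (fun t : ℝ => c * t) c t := by
      simpa using (hasDerivAt_id t).const_mul c
    have h2 : HasDerivAt (fun t => Real.sinh (c*t)) (Real.cosh (c*t) * c) t :=
      (Real.hasDerivAt_sinh (c*t)).comp t h1
    have h3 := h2.div_const c
    rw [hSfun]
    refine h3.congr_deriv ?_
    field_simp
  set Sn' : ℝ → ℝ := fun t => ω * (((n - 1 : ℕ):ℝ) * S t ^ (n - 1 - 1) * Real.cosh (c*t))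
    with hSn'_def
  have hSnfun : Sn = fun t => ω * S t ^ (n-1) := funext hSn
  have hSnderiv : ∀ t : ℝ, HasDerivAt Sn (Sn' t) t := by
    intro t
    rw [hSnfun]
    exact ((hSderiv t).pow (n-1)).const_mul ω
  have hSncont : Continuous Sn := by
    rw [hSnfun]; fun_prop
  have hSn'cont : Continuous Sn' := by
    rw [hSn'_def]; fun_prop
  have hSnpos : ∀ t : ℝ, 0 < t → 0 < Sn t := by
    intro t ht
    rw [hSn]
    exact mul_pos hω (pow_pos (hSpos t ht) _)
  have hS0 : S 0 = 0 := by rw [hS]; simp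
  have hSn0 : Sn 0 = 0 := by
    rw [hSn, hS0, zero_pow (by omega : n - 1 ≠ 0), mul_zero]
  set A : ℝ → ℝ := fun t => ((n:ℝ) - 1) * Real.cosh (c*t) / (2 * S t) with hA_def
  have hcast : ((n - 1 : ℕ):ℝ) = (n:ℝ) - 1 := by
    push_cast [Nat.cast_sub (by omega : 1 ≤ n)]
    ring
  have hSn'A : ∀ t : ℝ, 0 < t → Sn' t = 2 * A t * Sn t := by
    intro t ht
    have hSne : S t ≠ 0 := (hSpos t ht).ne'
    have hidx : n - 1 = (n - 2) + 1 := by omega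
    have hidx2 : n - 1 - 1 = n - 2 := by omega
    simp only [hSn'_def, hA_def, hSn, hcast, hidx2]
    rw [hidx, pow_succ]
    field_simp
  have hAcoth : ∀ t : ℝ, 0 < t → A t = b * (Real.cosh (c*t) / Real.sinh (c*t)) := by
    intro t ht
    have hsh : Real.sinh (c*t) ≠ 0 := (aux_sinh_pos (by positivity)).ne'
    simp only [hA_def, hS t, hb_def]
    field_simp
  have hAb : ∀ t : ℝ, 0 < t → b ≤ A t := by
    intro t ht
    rw [hAcoth t ht]
    nlinarith [aux_one_le_coth (show (0:ℝ) < c*t by positivity)]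
  -- Bn facts
  have hBnfun : Bn = fun R => ∫ s in (0:ℝ)..R, Sn s := funext hBn
  have hBnderiv : ∀ t : ℝ, HasDerivAt Bn (Sn t) t := by
    intro t
    rw [hBnfun]
    exact (hSncont.integral_hasStrictDerivAt 0 t).hasDerivAt
  have hBndiff : Differentiable ℝ Bn := fun t => (hBnderiv t).differentiableAt
  have hBncont : Continuous Bn := hBndiff.continuous
  have hBnpos : ∀ s : ℝ, 0 < s → 0 < Bn s := by
    intro s hs
    rw [hBn]
    apply intervalIntegral_pos_of_pos_on (hSncont.intervalIntegrable 0 s) _ hs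
    intro x hx
    exact hSnpos x hx.1
  have hBnle : ∀ s : ℝ, 0 < s → 2 * b * Bn s ≤ Sn s := by
    intro s hs
    have hint1 : IntervalIntegrable (fun t => 2*b*Sn t) volume 0 s :=
      ((continuous_const.mul hSncont).intervalIntegrable 0 s)
    have hint2 : IntervalIntegrable Sn' volume 0 s := hSn'cont.intervalIntegrable 0 s
    have hpt : ∀ t ∈ Icc (0:ℝ) s, 2*b*Sn t ≤ Sn' t := by
      intro t ht
      rcases eq_or_lt_of_le ht.1 with h0 | h0
      · rw [← h0, hSn0, mul_zero]
        rw [hSn'_def]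
        have : (0:ℝ) ≤ S 0 ^ (n - 1 - 1) := by rw [hS0]; positivity
        have hch := (Real.cosh_pos (c*0)).le
        have hnn : (0:ℝ) ≤ ((n - 1 : ℕ):ℝ) := Nat.cast_nonneg _
        positivity
      · rw [hSn'A t h0]
        have h1 := hAb t h0
        have h2 := (hSnpos t h0).le
        nlinarith
    have hmono := intervalIntegral.integral_mono_on hs.le hint1 hint2 hpt
    have hftc : ∫ t in (0:ℝ)..s, Sn' t = Sn s - Sn 0 :=
      intervalIntegral.integral_eq_sub_of_hasDerivAt (fun x _ => hSnderiv x) hint2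
    rw [hftc, hSn0, sub_zero] at hmono
    calc 2*b*Bn s = ∫ t in (0:ℝ)..s, 2*b*Sn t := by
          rw [hBn, intervalIntegral.integral_const_mul]
      _ ≤ Sn s := hmono
  -- Q and V facts
  have hQfun : Q = fun s => V s / Bn s := funext hQ
  have hQdiffAt : ∀ s : ℝ, 0 < s → DifferentiableAt ℝ Q s := by
    intro s hs
    rw [hQfun]
    exact (hVdiff s hs).div (hBnderiv s).differentiableAt (hBnpos s hs).ne'
  have hQpos : ∀ s : ℝ, 0 < s → 0 < Q s := by
    intro s hs
    rw [hQ]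
    exact div_pos (hVpos s hs) (hBnpos s hs)
  have hQ'nonneg : ∀ s : ℝ, 0 < s → 0 ≤ deriv Q s := fun s hs =>
    aux_deriv_nonneg hs hQmono (hQdiffAt s hs)
  have hV'eq : ∀ s : ℝ, 0 < s → deriv V s = deriv Q s * Bn s + Q s * Sn s := by
    intro s hs
    have hev : (fun t => Q t * Bn t) =ᶠ[nhds s] V := by
      filter_upwards [IsOpen.mem_nhds isOpen_Ioi hs] with t ht
      rw [hQ]
      exact div_mul_cancel₀ _ (hBnpos t ht).ne'
    have hD : HasDerivAt (fun t => Q t * Bn t) (deriv Q s * Bn s + Q s * Sn s) s :=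
      ((hQdiffAt s hs).hasDerivAt).mul (hBnderiv s)
    rw [← hev.deriv_eq]
    exact hD.deriv
  have hV'nonneg : ∀ s : ℝ, 0 < s → 0 ≤ deriv V s := by
    intro s hs
    rw [hV'eq s hs]
    have h1 := hQ'nonneg s hs
    have h2 := (hBnpos s hs).le
    have h3 := (hQpos s hs).le
    have h4 := (hSnpos s hs).le
    nlinarith
  -- the comparison function
  set th : ℝ → ℝ := fun R => Real.cosh (c*R/2) / Real.sinh (c*R/2) with hth_def
  set w0 : ℝ → ℝ := fun R => 2*π/R with hw0_def
  set Φ : ℝ → ℝ := fun R =>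
      b^2*(th R)^2 + ((w0 R)^2 + 2*b*(th R)*(w0 R))*(4*C)
        + ((w0 R + b*(th R))^2/(2*b))*(C-1)*(8/R) with hPhi_def
  have key : ∀ R : ℝ, 0 < R →
      (∫ s in (R / 2)..R, (deriv (f R) s) ^ 2 * deriv V s) /
        (∫ s in (R / 2)..R, (f R s) ^ 2 * deriv V s) ≤ Φ R := by
    intro R hR
    have hR2 : 0 < R/2 := by linarith
    have hhalf : R/2 ≤ R := by linarith
    have hmemIoi : ∀ s ∈ Icc (R/2) R, 0 < s := fun s hs => lt_of_lt_of_le hR2 hs.1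
    have hIccuIcc : uIcc (R/2) R = Icc (R/2) R := uIcc_of_le hhalf
    have hθ1 : 1 ≤ th R := aux_one_le_coth (by positivity)
    have hθ0 : 0 < th R := lt_of_lt_of_le one_pos hθ1
    have hπ := Real.pi_pos
    have hw0R : w0 R = 2*π/R := rfl
    have hω₀pos : 0 < 2*π/R := by positivity
    -- the test function pieces
    set G : ℝ → ℝ := fun s => Real.sin (2*π*(s - R/2)/R) with hG_def
    set G' : ℝ → ℝ := fun s => (2*π/R) * Real.cos (2*π*(s - R/2)/R) with hG'_def
    have hGderiv : ∀ s : ℝ, HasDerivAt G (G' s) s := by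
      intro s
      have h1 : HasDerivAt (fun u : ℝ => 2*π*(u - R/2)/R) (2*π/R) s := by
        have h := (((hasDerivAt_id s).sub_const (R/2)).const_mul (2*π)).div_const R
        simpa using h
      have h2 := (Real.hasDerivAt_sin (2*π*(s-R/2)/R)).comp s h1
      rw [hG_def, hG'_def]
      refine h2.congr_deriv ?_
      ring
    have hGcont : Continuous G := by rw [hG_def]; fun_prop
    have hG'cont : Continuous G' := by rw [hG'_def]; fun_prop
    have hfval : ∀ s : ℝ, f R s = G s / Real.sqrt (Sn s) := fun s => hf R s
    have hfRfun : f R = fun s => G s / Real.sqrt (Sn s) := funext hfval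
    -- derivative of the test function
    have hfderiv : ∀ s ∈ Icc (R/2) R,
        deriv (f R) s = (G' s - G s * A s) / Real.sqrt (Sn s) := by
      intro s hs
      have hs0 := hmemIoi s hs
      have hSns := hSnpos s hs0
      have hsqpos : 0 < Real.sqrt (Sn s) := Real.sqrt_pos.mpr hSns
      have h1 : HasDerivAt (fun t => Real.sqrt (Sn t)) (Sn' s / (2 * Real.sqrt (Sn s))) s :=
        (hSnderiv s).sqrt hSns.ne'
      have h2 := (hGderiv s).div h1 hsqpos.ne'
      rw [hfRfun, show deriv (fun s => G s / Real.sqrt (Sn s)) s = _ from h2.deriv, hSn'A s hs0]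
      set q : ℝ := Real.sqrt (Sn s) with hq_def
      have hSn_q : Sn s = q^2 := (Real.sq_sqrt hSns.le).symm
      rw [hSn_q]
      have hqne : q ≠ 0 := hsqpos.ne'
      field_simp
    -- rewrite the two integrals
    set P : ℝ → ℝ := fun s => (G' s - G s * A s)^2 / Sn s with hP_def
    have hNrw : (∫ s in (R/2)..R, deriv (f R) s ^ 2 * deriv V s)
        = ∫ s in (R/2)..R, P s * deriv V s := by
      apply intervalIntegral.integral_congr
      intro s hs
      rw [hIccuIcc] at hs
      show deriv (f R) s ^ 2 * deriv V s = P s * deriv V s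
      simp only [hP_def]
      rw [hfderiv s hs, div_pow, Real.sq_sqrt (hSnpos s (hmemIoi s hs)).le]
    have hDrw : (∫ s in (R/2)..R, f R s ^ 2 * deriv V s)
        = ∫ s in (R/2)..R, (G s)^2 / Sn s * deriv V s := by
      apply intervalIntegral.integral_congr
      intro s hs
      rw [hIccuIcc] at hs
      show f R s ^ 2 * deriv V s = (G s)^2 / Sn s * deriv V s
      rw [hfval s, div_pow, Real.sq_sqrt (hSnpos s (hmemIoi s hs)).le]
    -- integrability facts
    have hV'int : IntervalIntegrable (deriv V) volume (R/2) R := by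
      apply intervalIntegrable_deriv_of_nonneg (g := V)
      · rw [hIccuIcc]
        intro s hs
        exact ((hVdiff s (hmemIoi s hs)).continuousAt).continuousWithinAt
      · intro x hx
        rw [min_eq_left hhalf, max_eq_right hhalf] at hx
        exact (hVdiff x (lt_of_lt_of_le hR2 hx.1.le)).hasDerivAt
      · intro x hx
        rw [min_eq_left hhalf, max_eq_right hhalf] at hx
        exact hV'nonneg x (lt_of_lt_of_le hR2 hx.1.le)
    have hQ'int : IntervalIntegrable (deriv Q) volume (R/2) R := by
      apply intervalIntegrable_deriv_of_nonneg (g := Q)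
      · rw [hIccuIcc]
        intro s hs
        exact ((hQdiffAt s (hmemIoi s hs)).continuousAt).continuousWithinAt
      · intro x hx
        rw [min_eq_left hhalf, max_eq_right hhalf] at hx
        exact (hQdiffAt x (lt_of_lt_of_le hR2 hx.1.le)).hasDerivAt
      · intro x hx
        rw [min_eq_left hhalf, max_eq_right hhalf] at hx
        exact hQ'nonneg x (lt_of_lt_of_le hR2 hx.1.le)
    have hSneIcc : ∀ s ∈ uIcc (R/2) R, Sn s ≠ 0 := by
      intro s hs
      rw [hIccuIcc] at hs
      exact (hSnpos s (hmemIoi s hs)).ne'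
    have hAcontOn : ContinuousOn A (uIcc (R/2) R) := by
      rw [hA_def]
      apply ContinuousOn.div
      · fun_prop
      · fun_prop
      · intro s hs
        rw [hIccuIcc] at hs
        have := hSpos s (hmemIoi s hs)
        positivity
    have hQcontOn : ContinuousOn Q (uIcc (R/2) R) := by
      rw [hIccuIcc]
      intro s hs
      exact ((hQdiffAt s (hmemIoi s hs)).continuousAt).continuousWithinAt
    have hPcontOn : ContinuousOn P (uIcc (R/2) R) := by
      rw [hP_def]
      apply ContinuousOn.div
      · apply ContinuousOn.pow
        apply ContinuousOn.sub hG'cont.continuousOn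
        exact ContinuousOn.mul hGcont.continuousOn hAcontOn
      · exact hSncont.continuousOn
      · exact hSneIcc
    have hPVint : IntervalIntegrable (fun s => P s * deriv V s) volume (R/2) R :=
      hV'int.continuousOn_mul hPcontOn
    have hg2contOn : ContinuousOn (fun s => (G s)^2 / Sn s) (uIcc (R/2) R) := by
      apply ContinuousOn.div ((hGcont.pow 2).continuousOn) hSncont.continuousOn hSneIcc
    have hDenint : IntervalIntegrable (fun s => (G s)^2 / Sn s * deriv V s) volume (R/2) R :=
      hV'int.continuousOn_mul hg2contOn
    have hG2Qint : IntervalIntegrable (fun s => (G s)^2 * Q s) volume (R/2) R :=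
      (((hGcont.pow 2).continuousOn).mul hQcontOn).intervalIntegrable
    have hQint : IntervalIntegrable Q volume (R/2) R := hQcontOn.intervalIntegrable
    -- upper bound function
    set c1 : ℝ := (2*π/R)^2 + 2*b*(th R)*(2*π/R) with hc1_def
    have hc1nn : 0 ≤ c1 := by
      rw [hc1_def]
      have : 0 ≤ 2*b*(th R)*(2*π/R) := by positivity
      positivity
    set K1 : ℝ := (2*π/R + b*(th R))^2/(2*b) with hK1_def
    have hK1nn : 0 ≤ K1 := by rw [hK1_def]; positivity
    set X : ℝ → ℝ := fun s => (c1 + b^2*(th R)^2*(G s)^2) * Q s with hX_def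
    set UB : ℝ → ℝ := fun s => X s + K1 * deriv Q s with hUB_def
    have hXcontOn : ContinuousOn X (uIcc (R/2) R) := by
      rw [hX_def]
      apply ContinuousOn.mul _ hQcontOn
      fun_prop
    have hXint : IntervalIntegrable X volume (R/2) R := hXcontOn.intervalIntegrable
    have hUBint : IntervalIntegrable UB volume (R/2) R := by
      rw [hUB_def]
      exact hXint.add (hQ'int.const_mul K1)
    -- pointwise bound on the numerator integrand
    have hAub : ∀ s ∈ Icc (R/2) R, A s ≤ b*(th R) := by
      intro s hs
      have hs0 := hmemIoi s hs
      have hcs : c*R/2 ≤ c*s := by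
        have h1 : c*(R/2) ≤ c*s := mul_le_mul_of_nonneg_left hs.1 hc.le
        linarith only [h1]
      have hcR2 : (0:ℝ) < c*R/2 := by
        have h1 := mul_pos hc hR2
        linarith only [h1]
      have h := aux_coth_anti hcR2 hcs
      rw [hAcoth s hs0]
      have hthR : th R = Real.cosh (c*R/2) / Real.sinh (c*R/2) := rfl
      rw [hthR]
      exact mul_le_mul_of_nonneg_left h hb.le
    have hpt : ∀ s ∈ Icc (R/2) R, P s * deriv V s ≤ UB s := by
      intro s hs
      have hs0 := hmemIoi s hs
      have hSns := hSnpos s hs0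
      have hAub' := hAub s hs
      have hAlb : b ≤ A s := hAb s hs0
      have hA0 : 0 ≤ A s := le_trans hb.le hAlb
      have hQs : 0 ≤ Q s := (hQpos s hs0).le
      have hQ's : 0 ≤ deriv Q s := hQ'nonneg s hs0
      have hid : P s * deriv V s
          = (G' s - G s*A s)^2 * Q s + (G' s - G s*A s)^2 * (Bn s / Sn s) * deriv Q s := by
        simp only [hP_def]
        rw [hV'eq s hs0]
        field_simp
        ring
      have hBnSn : Bn s / Sn s ≤ 1/(2*b) := by
        rw [div_le_div_iff₀ hSns (by positivity)]
        have h := hBnle s hs0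
        linarith only [h]
      have hBnSn0 : 0 ≤ Bn s / Sn s := div_nonneg (hBnpos s hs0).le hSns.le
      have hG1 : |G s| ≤ 1 := Real.abs_sin_le_one _
      have hG'1 : |G' s| ≤ 2*π/R := by
        rw [hG'_def]
        rw [abs_mul, abs_of_pos hω₀pos]
        exact mul_le_of_le_one_right hω₀pos.le (Real.abs_cos_le_one _)
      have hsq1 : (G' s)^2 ≤ (2*π/R)^2 := by
        rw [← sq_abs (G' s)]
        exact pow_le_pow_left₀ (abs_nonneg _) hG'1 2
      have habs : (G' s - G s*A s)^2 ≤ (2*π/R + b*(th R))^2 := by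
        have h1 : |G' s - G s*A s| ≤ 2*π/R + b*(th R) := by
          have h3 : |G s * A s| ≤ b*(th R) := by
            rw [abs_mul, abs_of_nonneg hA0]
            calc |G s| * A s ≤ 1 * (b*(th R)) := mul_le_mul hG1 hAub' hA0 zero_le_one
              _ = b*(th R) := one_mul _
          calc |G' s - G s*A s| ≤ |G' s| + |G s*A s| := abs_sub _ _
            _ ≤ 2*π/R + b*(th R) := add_le_add hG'1 h3
        calc (G' s - G s*A s)^2 = |G' s - G s*A s|^2 := (sq_abs _).symm
          _ ≤ (2*π/R + b*(th R))^2 := pow_le_pow_left₀ (abs_nonneg _) h1 2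
      have hcross : (G' s - G s*A s)^2 ≤ c1 + b^2*(th R)^2*(G s)^2 := by
        have e1 : (G' s - G s*A s)^2 = (G' s)^2 - 2*(G s * G' s)*A s + (G s)^2*(A s)^2 := by
          ring
        have e2 : -(2*(G s*G' s)*A s) ≤ 2*b*(th R)*(2*π/R) := by
          have h1 : |G s * G' s| ≤ 2*π/R := by
            rw [abs_mul]
            calc |G s| * |G' s| ≤ 1*(2*π/R) :=
                  mul_le_mul hG1 hG'1 (abs_nonneg _) zero_le_one
              _ = 2*π/R := one_mul _
          have h2 : -(G s * G' s) ≤ 2*π/R := le_trans (neg_le_abs _) h1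
          have h3 : 0 ≤ 2*A s := by linarith only [hA0]
          calc -(2*(G s*G' s)*A s) = (-(G s*G' s))*(2*A s) := by ring
            _ ≤ (2*π/R)*(2*A s) := mul_le_mul_of_nonneg_right h2 h3
            _ ≤ (2*π/R)*(2*(b*(th R))) := by
                apply mul_le_mul_of_nonneg_left _ hω₀pos.le
                linarith only [hAub']
            _ = 2*b*(th R)*(2*π/R) := by ring
        have e3 : (G s)^2*(A s)^2 ≤ b^2*(th R)^2*(G s)^2 := by
          have h4 : (A s)^2 ≤ (b*(th R))^2 := pow_le_pow_left₀ hA0 hAub' 2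
          have h5 : (G s)^2*(A s)^2 ≤ (G s)^2*(b*(th R))^2 :=
            mul_le_mul_of_nonneg_left h4 (sq_nonneg _)
          calc (G s)^2*(A s)^2 ≤ (G s)^2*(b*(th R))^2 := h5
            _ = b^2*(th R)^2*(G s)^2 := by ring
        rw [hc1_def]
        linarith only [e1, hsq1, e2, e3]
      rw [hid, hUB_def, hX_def]
      have t1 : (G' s - G s*A s)^2 * Q s ≤ (c1 + b^2*(th R)^2*(G s)^2) * Q s :=
        mul_le_mul_of_nonneg_right hcross hQs
      have t2 : (G' s - G s*A s)^2 * (Bn s/Sn s) * deriv Q s ≤ K1 * deriv Q s := by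
        apply mul_le_mul_of_nonneg_right _ hQ's
        calc (G' s - G s*A s)^2 * (Bn s/Sn s) ≤ (2*π/R + b*(th R))^2 * (1/(2*b)) :=
              mul_le_mul habs hBnSn hBnSn0 (sq_nonneg _)
          _ = K1 := by rw [hK1_def]; ring
      exact add_le_add t1 t2
    -- chain of integral estimates
    have hN1 : (∫ s in (R/2)..R, P s * deriv V s) ≤ ∫ s in (R/2)..R, UB s :=
      intervalIntegral.integral_mono_on hhalf hPVint hUBint hpt
    have hQftc : ∫ s in (R/2)..R, deriv Q s = Q R - Q (R/2) := by
      apply intervalIntegral.integral_eq_sub_of_hasDerivAt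
      · intro x hx
        rw [hIccuIcc] at hx
        exact (hQdiffAt x (hmemIoi x hx)).hasDerivAt
      · exact hQ'int
    have hUBsplit : (∫ s in (R/2)..R, UB s)
        = (∫ s in (R/2)..R, X s) + K1 * (Q R - Q (R/2)) := by
      rw [hUB_def]
      rw [intervalIntegral.integral_add hXint (hQ'int.const_mul K1),
          intervalIntegral.integral_const_mul, hQftc]
    have hXsplit : (∫ s in (R/2)..R, X s)
        = c1 * (∫ s in (R/2)..R, Q s) + b^2*(th R)^2 * (∫ s in (R/2)..R, (G s)^2 * Q s) := by
      rw [hX_def]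
      rw [← intervalIntegral.integral_const_mul, ← intervalIntegral.integral_const_mul,
          ← intervalIntegral.integral_add (hQint.const_mul c1) (hG2Qint.const_mul _)]
      apply intervalIntegral.integral_congr
      intro s _
      ring
    have hQmonIcc : ∀ s ∈ Icc (R/2) R, Q s ≤ Q R := by
      intro s hs
      exact hQmono (Set.mem_Ioi.mpr (hmemIoi s hs)) (Set.mem_Ioi.mpr hR) hs.2
    have hIQ : (∫ s in (R/2)..R, Q s) ≤ Q R * (R/2) := by
      have h := intervalIntegral.integral_mono_on hhalf hQint
        (_root_.intervalIntegrable_const (c := Q R)) hQmonIcc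
      rw [intervalIntegral.integral_const, smul_eq_mul] at h
      calc (∫ s in (R/2)..R, Q s) ≤ (R - R/2) * Q R := h
        _ = Q R * (R/2) := by ring
    have hG2QleDen : (∫ s in (R/2)..R, (G s)^2 * Q s)
        ≤ ∫ s in (R/2)..R, (G s)^2 / Sn s * deriv V s := by
      apply intervalIntegral.integral_mono_on hhalf hG2Qint hDenint
      intro s hs
      have hs0 := hmemIoi s hs
      have hSns := hSnpos s hs0
      have hidD : (G s)^2/Sn s * deriv V s
          = (G s)^2*Q s + (G s)^2*(Bn s/Sn s)*deriv Q s := by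
        rw [hV'eq s hs0]
        field_simp
        ring
      rw [hidD]
      have h0 : 0 ≤ (G s)^2*(Bn s/Sn s)*deriv Q s := by
        apply mul_nonneg (mul_nonneg (sq_nonneg _) _) (hQ'nonneg s hs0)
        exact div_nonneg (hBnpos s hs0).le hSns.le
      linarith only [h0]
    -- lower bound for the denominator
    have h58 : R/2 ≤ 5*R/8 := by linarith
    have h78 : 5*R/8 ≤ 7*R/8 := by linarith
    have h88 : 7*R/8 ≤ R := by linarith
    have hsubIcc1 : uIcc (R/2) (5*R/8) ⊆ uIcc (R/2) R := by
      rw [hIccuIcc, uIcc_of_le h58]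
      exact Icc_subset_Icc le_rfl (by linarith)
    have hsubIcc2 : uIcc (5*R/8) (7*R/8) ⊆ uIcc (R/2) R := by
      rw [hIccuIcc, uIcc_of_le h78]
      exact Icc_subset_Icc (by linarith) (by linarith)
    have hsubIcc3 : uIcc (7*R/8) R ⊆ uIcc (R/2) R := by
      rw [hIccuIcc, uIcc_of_le h88]
      exact Icc_subset_Icc (by linarith) le_rfl
    have hG2Qc : ContinuousOn (fun s => (G s)^2 * Q s) (uIcc (R/2) R) :=
      ((hGcont.pow 2).continuousOn).mul hQcontOn
    have hint1 : IntervalIntegrable (fun s => (G s)^2 * Q s) volume (R/2) (5*R/8) :=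
      (hG2Qc.mono hsubIcc1).intervalIntegrable
    have hint2 : IntervalIntegrable (fun s => (G s)^2 * Q s) volume (5*R/8) (7*R/8) :=
      (hG2Qc.mono hsubIcc2).intervalIntegrable
    have hint3 : IntervalIntegrable (fun s => (G s)^2 * Q s) volume (7*R/8) R :=
      (hG2Qc.mono hsubIcc3).intervalIntegrable
    have hadd1 := intervalIntegral.integral_add_adjacent_intervals hint2 hint3
    have hadd2 := intervalIntegral.integral_add_adjacent_intervals hint1 (hint2.trans hint3)
    have hnn1 : 0 ≤ ∫ s in (R/2)..(5*R/8), (G s)^2 * Q s := by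
      apply intervalIntegral.integral_nonneg h58
      intro u hu
      have hu0 : 0 < u := lt_of_lt_of_le hR2 hu.1
      exact mul_nonneg (sq_nonneg _) (hQpos u hu0).le
    have hnn3 : 0 ≤ ∫ s in (7*R/8)..R, (G s)^2 * Q s := by
      apply intervalIntegral.integral_nonneg h88
      intro u hu
      have hu0 : 0 < u := lt_of_lt_of_le (by linarith : (0:ℝ) < 7*R/8) hu.1
      exact mul_nonneg (sq_nonneg _) (hQpos u hu0).le
    have hmid : Q (R/2) * (R/8) ≤ ∫ s in (5*R/8)..(7*R/8), (G s)^2 * Q s := by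
      have hptm : ∀ s ∈ Icc (5*R/8) (7*R/8), Q (R/2) * (1/2) ≤ (G s)^2 * Q s := by
        intro s hs
        have hs0 : 0 < s := lt_of_lt_of_le (by linarith : (0:ℝ) < 5*R/8) hs.1
        have hsIcc : s ∈ Icc (R/2) R := ⟨by linarith [hs.1], by linarith [hs.2]⟩
        have hQls : Q (R/2) ≤ Q s :=
          hQmono (Set.mem_Ioi.mpr hR2) (Set.mem_Ioi.mpr hs0) hsIcc.1
        have h2π : (0:ℝ) ≤ 2*π := by positivity
        have hx1 : π/4 ≤ 2*π*(s - R/2)/R := by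
          rw [le_div_iff₀ hR]
          have h := mul_le_mul_of_nonneg_left
            (show R/8 ≤ s - R/2 by linarith only [hs.1]) h2π
          linarith only [h]
        have hx2 : 2*π*(s - R/2)/R ≤ 3*π/4 := by
          rw [div_le_iff₀ hR]
          have h := mul_le_mul_of_nonneg_left
            (show s - R/2 ≤ 3*R/8 by linarith only [hs.2]) h2π
          linarith only [h]
        have hsin : Real.sqrt 2 / 2 ≤ G s := by
          show Real.sqrt 2 / 2 ≤ Real.sin (2*π*(s - R/2)/R)
          set x := 2*π*(s - R/2)/R
          have h1 : Real.sin x = Real.cos (π/2 - x) := (Real.cos_pi_div_two_sub x).symm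
          rw [h1, ← Real.cos_abs (π/2 - x)]
          rw [← Real.cos_pi_div_four]
          apply Real.cos_le_cos_of_nonneg_of_le_pi (abs_nonneg _) (by linarith)
          rw [abs_le]
          constructor <;> [linarith; linarith]
        have hs2 : Real.sqrt 2 ^ 2 = 2 := Real.sq_sqrt (by norm_num)
        have hsq20 : 0 ≤ Real.sqrt 2 / 2 := by positivity
        have hGge : 1/2 ≤ (G s)^2 := by
          have hp := pow_le_pow_left₀ hsq20 hsin 2
          have he : (Real.sqrt 2 / 2)^2 = 1/2 := by
            rw [div_pow, hs2]; norm_num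
          linarith only [hp, he]
        have hQR2 : 0 ≤ Q (R/2) := (hQpos _ hR2).le
        have hQs0 : 0 ≤ Q s := le_trans hQR2 hQls
        calc Q (R/2) * (1/2) ≤ Q s * (1/2) :=
              mul_le_mul_of_nonneg_right hQls (by norm_num)
          _ = (1/2) * Q s := by ring
          _ ≤ (G s)^2 * Q s := mul_le_mul_of_nonneg_right hGge hQs0
      have h := intervalIntegral.integral_mono_on h78
        (_root_.intervalIntegrable_const (c := Q (R/2) * (1/2))) hint2 hptm
      rw [intervalIntegral.integral_const, smul_eq_mul] at h
      calc Q (R/2) * (R/8) = (7*R/8 - 5*R/8) * (Q (R/2) * (1/2)) := by ring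
        _ ≤ _ := h
    have hG2Qlb : Q (R/2) * (R/8) ≤ ∫ s in (R/2)..R, (G s)^2 * Q s := by
      rw [← hadd2, ← hadd1]
      linarith only [hnn1, hnn3, hmid]
    have hDenLB : Q (R/2) * (R/8) ≤ ∫ s in (R/2)..R, (G s)^2 / Sn s * deriv V s :=
      le_trans hG2Qlb hG2QleDen
    have hQR2pos : 0 < Q (R/2) := hQpos _ hR2
    have hDenpos : 0 < ∫ s in (R/2)..R, (G s)^2 / Sn s * deriv V s :=
      lt_of_lt_of_le (by positivity) hDenLB
    -- doubling
    have hQdb : Q R < C * Q (R/2) := by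
      have h := hQdoubling R hR
      rwa [div_lt_iff₀ hQR2pos] at h
    -- final assembly
    rw [hNrw, hDrw]
    rw [div_le_iff₀ hDenpos]
    set Den : ℝ := ∫ s in (R/2)..R, (G s)^2 / Sn s * deriv V s with hDen_def
    set IG : ℝ := ∫ s in (R/2)..R, (G s)^2 * Q s with hIG_def
    have hQR2R : Q (R/2) * R ≤ 8 * Den := by linarith only [hDenLB]
    have m1 : c1 * (∫ s in (R/2)..R, Q s) ≤ c1 * (Q R * (R/2)) :=
      mul_le_mul_of_nonneg_left hIQ hc1nn
    have m2 : Q R * (R/2) ≤ C * Q (R/2) * (R/2) :=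
      mul_le_mul_of_nonneg_right hQdb.le (by linarith)
    have m3 : C * Q (R/2) * (R/2) ≤ 4 * C * Den := by
      have hC0 : (0:ℝ) ≤ C := by linarith only [hC]
      have h := mul_le_mul_of_nonneg_left hQR2R hC0
      calc C * Q (R/2) * (R/2) = (C * (Q (R/2) * R))/2 := by ring
        _ ≤ (C * (8 * Den))/2 := by linarith only [h]
        _ = 4 * C * Den := by ring
    have m4 : c1 * (Q R * (R/2)) ≤ c1 * (4 * C * Den) :=
      mul_le_mul_of_nonneg_left (le_trans m2 m3) hc1nn
    have m5 : b^2*(th R)^2 * IG ≤ b^2*(th R)^2 * Den :=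
      mul_le_mul_of_nonneg_left hG2QleDen (by positivity)
    have m6 : K1 * (Q R - Q (R/2)) ≤ K1 * ((C-1) * (8/R) * Den) := by
      apply mul_le_mul_of_nonneg_left _ hK1nn
      have h1 : Q R - Q (R/2) ≤ (C-1) * Q (R/2) := by linarith only [hQdb]
      have h2 : (C-1) * Q (R/2) ≤ (C-1) * (8/R) * Den := by
        have hC1 : (0:ℝ) ≤ C - 1 := by linarith only [hC]
        have h3 : Q (R/2) ≤ (8/R) * Den := by
          rw [div_mul_eq_mul_div, le_div_iff₀ hR]
          linarith only [hQR2R]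
        calc (C-1) * Q (R/2) ≤ (C-1) * ((8/R)*Den) := mul_le_mul_of_nonneg_left h3 hC1
          _ = (C-1) * (8/R) * Den := by ring
      linarith only [h1, h2]
    have hPhiR : Φ R = b^2*(th R)^2 + c1*(4*C) + K1*(C-1)*(8/R) := by
      simp only [hPhi_def, hc1_def, hK1_def, hw0_def]
    calc (∫ s in (R/2)..R, P s * deriv V s) ≤ ∫ s in (R/2)..R, UB s := hN1
      _ = (∫ s in (R/2)..R, X s) + K1 * (Q R - Q (R/2)) := hUBsplit
      _ = c1 * (∫ s in (R/2)..R, Q s) + b^2*(th R)^2 * IG + K1 * (Q R - Q (R/2)) := by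
          rw [hXsplit]
      _ ≤ c1 * (4*C*Den) + b^2*(th R)^2 * Den + K1 * ((C-1)*(8/R)*Den) := by
          linarith only [le_trans m1 m4, m5, m6]
      _ = (b^2*(th R)^2 + c1*(4*C) + K1*(C-1)*(8/R)) * Den := by ring
      _ = Φ R * Den := by rw [hPhiR]
  have keynn : ∀ R : ℝ, 0 < R → 0 ≤
      (∫ s in (R / 2)..R, (deriv (f R) s) ^ 2 * deriv V s) /
        (∫ s in (R / 2)..R, (f R s) ^ 2 * deriv V s) := by
    intro R hR
    have hhalf : R/2 ≤ R := by linarith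
    apply div_nonneg
    · apply intervalIntegral.integral_nonneg hhalf
      intro u hu
      have hu0 : 0 < u := lt_of_lt_of_le (by linarith : (0:ℝ) < R/2) hu.1
      exact mul_nonneg (sq_nonneg _) (hV'nonneg u hu0)
    · apply intervalIntegral.integral_nonneg hhalf
      intro u hu
      have hu0 : 0 < u := lt_of_lt_of_le (by linarith : (0:ℝ) < R/2) hu.1
      exact mul_nonneg (sq_nonneg _) (hV'nonneg u hu0)
  have hthlim : Tendsto th atTop (nhds 1) := by
    have h2 : Tendsto (fun R : ℝ => c*R/2) atTop atTop := by
      apply Filter.Tendsto.atTop_div_const two_pos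
      exact Filter.Tendsto.const_mul_atTop hc tendsto_id
    exact aux_coth_tendsto.comp h2
  have hw0lim : Tendsto w0 atTop (nhds 0) := by
    have h := tendsto_inv_atTop_zero.const_mul (2*π)
    rw [mul_zero] at h
    rw [hw0_def]
    simpa [div_eq_mul_inv] using h
  have hRinvlim : Tendsto (fun R:ℝ => 8/R) atTop (nhds (0:ℝ)) := by
    have h := tendsto_inv_atTop_zero.const_mul (8:ℝ)
    rw [mul_zero] at h
    simpa [div_eq_mul_inv] using h
  have hPhit : Tendsto Φ atTop (nhds (b^2)) := by
    have t1 := (hthlim.pow 2).const_mul (b^2)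
    have t2 := ((hw0lim.pow 2).add ((hthlim.const_mul (2*b)).mul hw0lim)).mul_const (4*C)
    have t3 := ((((hw0lim.add (hthlim.const_mul b)).pow 2).div_const (2*b)).mul_const
      (C-1)).mul hRinvlim
    have total := (t1.add t2).add t3
    have hval : b^2*1^2 + ((0:ℝ)^2 + 2*b*1*0)*(4*C) + ((0 + b*1)^2/(2*b))*(C-1)*0 = b^2 := by
      ring
    rw [hval] at total
    rw [hPhi_def]
    convert total using 2
  have hev : (fun R =>
      (∫ s in (R / 2)..R, (deriv (f R) s) ^ 2 * deriv V s) /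
        (∫ s in (R / 2)..R, (f R s) ^ 2 * deriv V s)) ≤ᶠ[atTop] Φ := by
    filter_upwards [eventually_gt_atTop (0:ℝ)] with R hR using key R hR
  have hnn : ∀ᶠ R in atTop, (0:ℝ) ≤
      (∫ s in (R / 2)..R, (deriv (f R) s) ^ 2 * deriv V s) /
        (∫ s in (R / 2)..R, (f R s) ^ 2 * deriv V s) := by
    filter_upwards [eventually_gt_atTop (0:ℝ)] with R hR using keynn R hR
  have h1 : Filter.limsup (fun R =>
      (∫ s in (R / 2)..R, (deriv (f R) s) ^ 2 * deriv V s) /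
        (∫ s in (R / 2)..R, (f R s) ^ 2 * deriv V s)) atTop ≤ Filter.limsup Φ atTop := by
    refine Filter.limsup_le_limsup hev ?_ ?_
    · exact Filter.IsBoundedUnder.isCoboundedUnder_le
        ⟨0, by simpa [Filter.eventually_map] using hnn⟩
    · exact hPhit.isBoundedUnder_le
  rw [hPhit.limsup_eq] at h1
  refine h1.trans ?_
  have hb2 : b^2 = ((n:ℝ)-1)^2 * c^2 / 4 := by rw [hb_def]; ring
  rw [hc2] at hb2
  rw [hb2]
  nlinarith [sq_nonneg ((n:ℝ)-1), hκ', hC]
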